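/- The map phi_{27,γ} = [γx²y : γxy² : (x+y)(x+γy)z] (with γ ≠ 0,1) is equivalent to phi_{27,γ'} (γ' ≠ 0,1) under pre- and post-composition with automorphisms of P² if and only if γ' = γ or γ' = 1/γ. In particular, the automorphism alpha([x:y:z]) = [y:x:-z] conjugates the base configuration of phi_{27,γ} to that of phi_{27,1/γ}. -/

import Mathlib

/-- The homaloidal triple of cubics defining the plane Cremona map
`φ₂₇,γ = [γx²y : γxy² : (x+y)(x+γy)z]`. -/
noncomputable def F27 (γ : ℂ) (v : Fin 3 → ℂ) : Fin 3 → ℂ :=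
  ![γ * (v 0) ^ 2 * v 1,
    γ * v 0 * (v 1) ^ 2,
    (v 0 + v 1) * (v 0 + γ * v 1) * v 2]

/-- `φ₂₇,γ'` is equivalent to `φ₂₇,γ`, i.e. `φ₂₇,γ' = α' ∘ φ₂₇,γ ∘ α` for automorphisms
`α, α'` of `ℙ²`: there are invertible matrices `M, M'` and a nonzero scalar `c` with
`F₂₇,γ' = c · M' ∘ F₂₇,γ ∘ M` (two reduced homogeneous triples of the same degree define
the same map of `ℙ²` iff they are proportional). -/
def Equiv27 (γ γ' : ℂ) : Prop :=
  ∃ (M M' : Matrix.GeneralLinearGroup (Fin 3) ℂ) (c : ℂ), c ≠ 0 ∧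
    ∀ v : Fin 3 → ℂ,
      F27 γ' v =
        c • (M' : Matrix (Fin 3) (Fin 3) ℂ).mulVec
          (F27 γ ((M : Matrix (Fin 3) (Fin 3) ℂ).mulVec v))

/-- The matrix of the automorphism `α([x:y:z]) = [y:x:-z]`. -/
def alphaMat : Matrix (Fin 3) (Fin 3) ℂ :=
  !![0, 1, 0; 1, 0, 0; 0, 0, -1]

/-! ### Auxiliary machinery -/

/-- A matrix in `GL₃(ℂ)` has injective `mulVec`. -/
lemma cr27_glinj (A : Matrix.GeneralLinearGroup (Fin 3) ℂ) (v : Fin 3 → ℂ)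
    (h : (A : Matrix (Fin 3) (Fin 3) ℂ).mulVec v = 0) : v = 0 := by
  calc v = ((A⁻¹ * A : Matrix.GeneralLinearGroup (Fin 3) ℂ) : Matrix (Fin 3) (Fin 3) ℂ).mulVec v := by
          rw [inv_mul_cancel]; simp [Matrix.one_mulVec]
    _ = ((A⁻¹ : Matrix.GeneralLinearGroup (Fin 3) ℂ) : Matrix (Fin 3) (Fin 3) ℂ).mulVec
          ((A : Matrix (Fin 3) (Fin 3) ℂ).mulVec v) := by
          rw [Units.val_mul, ← Matrix.mulVec_mulVec]
    _ = 0 := by rw [h, Matrix.mulVec_zero]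

/-- A matrix with injective `mulVec` has no zero column. -/
lemma cr27_colzero {A : Matrix (Fin 3) (Fin 3) ℂ}
    (hinj : ∀ v, A.mulVec v = 0 → v = 0) {j k : Fin 3}
    (h1 : ∀ i, i ≠ k → A i j = 0) (hk : A k j = 0) : False := by
  have hcol : A.mulVec (Pi.single j 1 : Fin 3 → ℂ) = 0 := by
    rw [Matrix.mulVec_single _ _ _]
    funext i
    by_cases hik : i = k
    · subst hik; simp [hk]
    · simp [h1 i hik]
  have := congrFun (hinj _ hcol) j
  simp at this

/-- A matrix with injective `mulVec` cannot have two columns supported on the same axis. -/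
lemma cr27_clash {A : Matrix (Fin 3) (Fin 3) ℂ}
    (hinj : ∀ v, A.mulVec v = 0 → v = 0)
    {j j' k : Fin 3} (hne : j ≠ j')
    (h1 : ∀ i, i ≠ k → A i j = 0) (h2 : ∀ i, i ≠ k → A i j' = 0) : False := by
  have hu : A.mulVec (A k j' • (Pi.single j 1 : Fin 3 → ℂ)
      - A k j • (Pi.single j' 1 : Fin 3 → ℂ)) = 0 := by
    rw [Matrix.mulVec_sub, Matrix.mulVec_smul, Matrix.mulVec_smul,
      Matrix.mulVec_single _ _ _, Matrix.mulVec_single _ _ _]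
    funext i
    by_cases hik : i = k
    · subst hik; simp [mul_comm]
    · simp [h1 i hik, h2 i hik]
  have h0 := hinj _ hu
  have hkj' : A k j' = 0 := by
    have := congrFun h0 j
    simpa [Pi.single_eq_same, Pi.single_eq_of_ne hne] using this
  exact cr27_colzero hinj h2 hkj'

/-- The zero set of the triple `F27 γ` is the union of the three coordinate axes. -/
lemma cr27_F27_eq_zero_iff (γ : ℂ) (hγ : γ ≠ 0) (v : Fin 3 → ℂ) :
    F27 γ v = 0 ↔ ((v 0 = 0 ∧ v 1 = 0) ∨ (v 0 = 0 ∧ v 2 = 0) ∨ (v 1 = 0 ∧ v 2 = 0)) := by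
  constructor
  · intro h
    have h0 := congrFun h 0
    have h2 := congrFun h 2
    simp [F27, hγ] at h0 h2
    rcases h0 with h0 | h0
    · rcases h2 with (h2 | h2) | h2
      · exact Or.inl ⟨h0, by rw [h0] at h2; simpa using h2⟩
      · refine Or.inl ⟨h0, ?_⟩
        rw [h0] at h2
        simpa [hγ] using h2
      · exact Or.inr (Or.inl ⟨h0, h2⟩)
    · rcases h2 with (h2 | h2) | h2
      · exact Or.inl ⟨by rw [h0] at h2; simpa using h2, h0⟩
      · exact Or.inl ⟨by rw [h0] at h2; simpa using h2, h0⟩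
      · exact Or.inr (Or.inr ⟨h0, h2⟩)
  · intro h
    funext i
    rcases h with ⟨h1, h2⟩ | ⟨h1, h2⟩ | ⟨h1, h2⟩ <;> fin_cases i <;> simp [F27, h1, h2]

/-! ### The two `good` leaves: the permutation fixes the axis `z = 0` -/

lemma cr27_good1 (γ γ' c : ℂ) (hγ0 : γ ≠ 0) (hc : c ≠ 0)
    (A A' : Matrix (Fin 3) (Fin 3) ℂ)
    (H : ∀ v, F27 γ' v = c • (A').mulVec (F27 γ (A.mulVec v)))
    (n1 : A 1 0 = 0) (n2 : A 2 0 = 0)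
    (m1 : A 0 1 = 0) (m2 : A 2 1 = 0)
    (k1 : A 0 2 = 0) (k2 : A 1 2 = 0) :
    γ' = γ ∨ γ' = 1 / γ := by
  have e1 := congrFun (H ![1,0,1]) 2
  have e2 := congrFun (H ![0,1,1]) 2
  have e3 := congrFun (H ![1,-1,1]) 2
  have e4 := congrFun (H ![1,-1,0]) 2
  simp only [F27, Matrix.mulVec, dotProduct, Fin.sum_univ_three, Pi.smul_apply,
    smul_eq_mul, Matrix.cons_val_zero, Matrix.cons_val_one, Matrix.head_cons,
    Matrix.cons_val_two, Matrix.tail_cons, n1, n2, m1, m2, k1, k2] at e1 e2 e3 e4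
  norm_num [hc] at e1 e2 e3 e4
  have hd : A' 2 2 * A 2 2 ≠ 0 := by
    intro h
    exact one_ne_zero (by linear_combination e1 + (c * (A 0 0 * A 0 0)) * h)
  have key2 : (A' 2 2 * A 2 2) * ((A 0 0 - A 1 1) * (A 0 0 - γ * A 1 1)) = 0 := by
    linear_combination e3 - e4
  rcases mul_eq_zero.mp key2 with h | h
  · exact absurd h hd
  rcases mul_eq_zero.mp h with h | h
  · left
    linear_combination e2 - γ * e1 - γ * c * A' 2 2 * A 2 2 * (A 0 0 + A 1 1) * h
  · right
    rw [eq_div_iff hγ0]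
    linear_combination γ * e2 - e1 - c * A' 2 2 * A 2 2 * (A 0 0 + γ * A 1 1) * h

lemma cr27_good2 (γ γ' c : ℂ) (hγ0 : γ ≠ 0) (hc : c ≠ 0)
    (A A' : Matrix (Fin 3) (Fin 3) ℂ)
    (H : ∀ v, F27 γ' v = c • (A').mulVec (F27 γ (A.mulVec v)))
    (n1 : A 0 0 = 0) (n2 : A 2 0 = 0)
    (m1 : A 1 1 = 0) (m2 : A 2 1 = 0)
    (k1 : A 0 2 = 0) (k2 : A 1 2 = 0) :
    γ' = γ ∨ γ' = 1 / γ := by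
  have e1 := congrFun (H ![1,0,1]) 2
  have e2 := congrFun (H ![0,1,1]) 2
  have e3 := congrFun (H ![1,-1,1]) 2
  have e4 := congrFun (H ![1,-1,0]) 2
  simp only [F27, Matrix.mulVec, dotProduct, Fin.sum_univ_three, Pi.smul_apply,
    smul_eq_mul, Matrix.cons_val_zero, Matrix.cons_val_one, Matrix.head_cons,
    Matrix.cons_val_two, Matrix.tail_cons, n1, n2, m1, m2, k1, k2] at e1 e2 e3 e4
  norm_num [hc] at e1 e2 e3 e4
  have hd : A' 2 2 * A 2 2 ≠ 0 := by
    intro h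
    exact one_ne_zero (by linear_combination e1 + (c * γ * A 1 0 * A 1 0) * h)
  have key2 : (A' 2 2 * A 2 2) * ((A 1 0 - A 0 1) * (γ * A 1 0 - A 0 1)) = 0 := by
    linear_combination e3 - e4
  rcases mul_eq_zero.mp key2 with h | h
  · exact absurd h hd
  rcases mul_eq_zero.mp h with h | h
  · right
    rw [eq_div_iff hγ0]
    linear_combination γ * e2 - e1 - c * γ * A' 2 2 * A 2 2 * (A 1 0 + A 0 1) * h
  · left
    linear_combination e2 - γ * e1 - c * A' 2 2 * A 2 2 * (γ * A 1 0 + A 0 1) * h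

/-! ### The four `bad` leaves: the double point would move off `[0:0:1]`, contradiction -/

lemma cr27_bad_a (γ γ' c : ℂ) (hγ0 : γ ≠ 0) (hc : c ≠ 0)
    (A A' : Matrix (Fin 3) (Fin 3) ℂ)
    (hinj' : ∀ v, A'.mulVec v = 0 → v = 0)
    (H : ∀ v, F27 γ' v = c • (A').mulVec (F27 γ (A.mulVec v)))
    (n1 : A 0 0 = 0) (n2 : A 2 0 = 0)
    (m1 : A 0 1 = 0) (m2 : A 1 1 = 0)
    (k1 : A 1 2 = 0) (k2 : A 2 2 = 0)
    (hp : A 1 0 ≠ 0) (hm : A 0 2 ≠ 0) :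
    False := by
  have hfac : (2 * γ * A 0 2 ^ 2 * A 1 0) ≠ 0 := by simp [hγ0, hm, hp]
  have g0 : A' 0 0 = 0 := by
    have f1 := congrFun (H ![1,0,1]) 0
    have f2 := congrFun (H ![1,0,-1]) 0
    simp only [F27, Matrix.mulVec, dotProduct, Fin.sum_univ_three, Pi.smul_apply,
      smul_eq_mul, Matrix.cons_val_zero, Matrix.cons_val_one, Matrix.head_cons,
      Matrix.cons_val_two, Matrix.tail_cons, n1, n2, m1, m2, k1, k2] at f1 f2
    norm_num [hc] at f1 f2
    have h6 : A' 0 0 * (2 * γ * A 0 2 ^ 2 * A 1 0) = 0 := by linear_combination f1 + f2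
    exact (mul_eq_zero.mp h6).resolve_right hfac
  have g1 : A' 1 0 = 0 := by
    have f1 := congrFun (H ![1,0,1]) 1
    have f2 := congrFun (H ![1,0,-1]) 1
    simp only [F27, Matrix.mulVec, dotProduct, Fin.sum_univ_three, Pi.smul_apply,
      smul_eq_mul, Matrix.cons_val_zero, Matrix.cons_val_one, Matrix.head_cons,
      Matrix.cons_val_two, Matrix.tail_cons, n1, n2, m1, m2, k1, k2] at f1 f2
    norm_num [hc] at f1 f2
    have h6 : A' 1 0 * (2 * γ * A 0 2 ^ 2 * A 1 0) = 0 := by linear_combination f1 + f2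
    exact (mul_eq_zero.mp h6).resolve_right hfac
  have g2 : A' 2 0 = 0 := by
    have f1 := congrFun (H ![1,0,1]) 2
    have f2 := congrFun (H ![1,0,-1]) 2
    simp only [F27, Matrix.mulVec, dotProduct, Fin.sum_univ_three, Pi.smul_apply,
      smul_eq_mul, Matrix.cons_val_zero, Matrix.cons_val_one, Matrix.head_cons,
      Matrix.cons_val_two, Matrix.tail_cons, n1, n2, m1, m2, k1, k2] at f1 f2
    norm_num [hc] at f1 f2
    have h6 : A' 2 0 * (c * (2 * γ * A 0 2 ^ 2 * A 1 0)) = 0 := by linear_combination -f1 - f2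
    exact (mul_eq_zero.mp h6).resolve_right (mul_ne_zero hc hfac)
  exact cr27_colzero hinj' (j := 0) (k := 0) (fun i _ => by fin_cases i <;> assumption) g0

lemma cr27_bad_b (γ γ' c : ℂ) (hγ0 : γ ≠ 0) (hc : c ≠ 0)
    (A A' : Matrix (Fin 3) (Fin 3) ℂ)
    (hinj' : ∀ v, A'.mulVec v = 0 → v = 0)
    (H : ∀ v, F27 γ' v = c • (A').mulVec (F27 γ (A.mulVec v)))
    (n1 : A 0 0 = 0) (n2 : A 1 0 = 0)
    (m1 : A 0 1 = 0) (m2 : A 2 1 = 0)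
    (k1 : A 1 2 = 0) (k2 : A 2 2 = 0)
    (hq : A 1 1 ≠ 0) (hm : A 0 2 ≠ 0) :
    False := by
  have hfac : (2 * γ * A 0 2 ^ 2 * A 1 1) ≠ 0 := by simp [hγ0, hm, hq]
  have g0 : A' 0 0 = 0 := by
    have f1 := congrFun (H ![0,1,1]) 0
    have f2 := congrFun (H ![0,1,-1]) 0
    simp only [F27, Matrix.mulVec, dotProduct, Fin.sum_univ_three, Pi.smul_apply,
      smul_eq_mul, Matrix.cons_val_zero, Matrix.cons_val_one, Matrix.head_cons,
      Matrix.cons_val_two, Matrix.tail_cons, n1, n2, m1, m2, k1, k2] at f1 f2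
    norm_num [hc] at f1 f2
    have h6 : A' 0 0 * (2 * γ * A 0 2 ^ 2 * A 1 1) = 0 := by linear_combination f1 + f2
    exact (mul_eq_zero.mp h6).resolve_right hfac
  have g1 : A' 1 0 = 0 := by
    have f1 := congrFun (H ![0,1,1]) 1
    have f2 := congrFun (H ![0,1,-1]) 1
    simp only [F27, Matrix.mulVec, dotProduct, Fin.sum_univ_three, Pi.smul_apply,
      smul_eq_mul, Matrix.cons_val_zero, Matrix.cons_val_one, Matrix.head_cons,
      Matrix.cons_val_two, Matrix.tail_cons, n1, n2, m1, m2, k1, k2] at f1 f2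
    norm_num [hc] at f1 f2
    have h6 : A' 1 0 * (2 * γ * A 0 2 ^ 2 * A 1 1) = 0 := by linear_combination f1 + f2
    exact (mul_eq_zero.mp h6).resolve_right hfac
  have g2 : A' 2 0 = 0 := by
    have f1 := congrFun (H ![0,1,1]) 2
    have f2 := congrFun (H ![0,1,-1]) 2
    simp only [F27, Matrix.mulVec, dotProduct, Fin.sum_univ_three, Pi.smul_apply,
      smul_eq_mul, Matrix.cons_val_zero, Matrix.cons_val_one, Matrix.head_cons,
      Matrix.cons_val_two, Matrix.tail_cons, n1, n2, m1, m2, k1, k2] at f1 f2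
    norm_num [hc] at f1 f2
    have h6 : A' 2 0 * (c * (2 * γ * A 0 2 ^ 2 * A 1 1)) = 0 := by linear_combination -f1 - f2
    exact (mul_eq_zero.mp h6).resolve_right (mul_ne_zero hc hfac)
  exact cr27_colzero hinj' (j := 0) (k := 0) (fun i _ => by fin_cases i <;> assumption) g0

lemma cr27_bad_c (γ γ' c : ℂ) (hγ0 : γ ≠ 0) (hc : c ≠ 0)
    (A A' : Matrix (Fin 3) (Fin 3) ℂ)
    (hinj' : ∀ v, A'.mulVec v = 0 → v = 0)
    (H : ∀ v, F27 γ' v = c • (A').mulVec (F27 γ (A.mulVec v)))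
    (n1 : A 1 0 = 0) (n2 : A 2 0 = 0)
    (m1 : A 0 1 = 0) (m2 : A 1 1 = 0)
    (k1 : A 0 2 = 0) (k2 : A 2 2 = 0)
    (hp : A 0 0 ≠ 0) (hm : A 1 2 ≠ 0) :
    False := by
  have hfac : (2 * γ * A 0 0 * A 1 2 ^ 2) ≠ 0 := by simp [hγ0, hm, hp]
  have g0 : A' 0 1 = 0 := by
    have f1 := congrFun (H ![1,0,1]) 0
    have f2 := congrFun (H ![1,0,-1]) 0
    simp only [F27, Matrix.mulVec, dotProduct, Fin.sum_univ_three, Pi.smul_apply,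
      smul_eq_mul, Matrix.cons_val_zero, Matrix.cons_val_one, Matrix.head_cons,
      Matrix.cons_val_two, Matrix.tail_cons, n1, n2, m1, m2, k1, k2] at f1 f2
    norm_num [hc] at f1 f2
    have h6 : A' 0 1 * (2 * γ * A 0 0 * A 1 2 ^ 2) = 0 := by linear_combination f1 + f2
    exact (mul_eq_zero.mp h6).resolve_right hfac
  have g1 : A' 1 1 = 0 := by
    have f1 := congrFun (H ![1,0,1]) 1
    have f2 := congrFun (H ![1,0,-1]) 1
    simp only [F27, Matrix.mulVec, dotProduct, Fin.sum_univ_three, Pi.smul_apply,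
      smul_eq_mul, Matrix.cons_val_zero, Matrix.cons_val_one, Matrix.head_cons,
      Matrix.cons_val_two, Matrix.tail_cons, n1, n2, m1, m2, k1, k2] at f1 f2
    norm_num [hc] at f1 f2
    have h6 : A' 1 1 * (2 * γ * A 0 0 * A 1 2 ^ 2) = 0 := by linear_combination f1 + f2
    exact (mul_eq_zero.mp h6).resolve_right hfac
  have g2 : A' 2 1 = 0 := by
    have f1 := congrFun (H ![1,0,1]) 2
    have f2 := congrFun (H ![1,0,-1]) 2
    simp only [F27, Matrix.mulVec, dotProduct, Fin.sum_univ_three, Pi.smul_apply,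
      smul_eq_mul, Matrix.cons_val_zero, Matrix.cons_val_one, Matrix.head_cons,
      Matrix.cons_val_two, Matrix.tail_cons, n1, n2, m1, m2, k1, k2] at f1 f2
    norm_num [hc] at f1 f2
    have h6 : A' 2 1 * (c * (2 * γ * A 0 0 * A 1 2 ^ 2)) = 0 := by linear_combination -f1 - f2
    exact (mul_eq_zero.mp h6).resolve_right (mul_ne_zero hc hfac)
  exact cr27_colzero hinj' (j := 1) (k := 0) (fun i _ => by fin_cases i <;> assumption) g0

lemma cr27_bad_d (γ γ' c : ℂ) (hγ0 : γ ≠ 0) (hc : c ≠ 0)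
    (A A' : Matrix (Fin 3) (Fin 3) ℂ)
    (hinj' : ∀ v, A'.mulVec v = 0 → v = 0)
    (H : ∀ v, F27 γ' v = c • (A').mulVec (F27 γ (A.mulVec v)))
    (n1 : A 0 0 = 0) (n2 : A 1 0 = 0)
    (m1 : A 1 1 = 0) (m2 : A 2 1 = 0)
    (k1 : A 0 2 = 0) (k2 : A 2 2 = 0)
    (hq : A 0 1 ≠ 0) (hm : A 1 2 ≠ 0) :
    False := by
  have hfac : (2 * γ * A 0 1 * A 1 2 ^ 2) ≠ 0 := by simp [hγ0, hm, hq]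
  have g0 : A' 0 1 = 0 := by
    have f1 := congrFun (H ![0,1,1]) 0
    have f2 := congrFun (H ![0,1,-1]) 0
    simp only [F27, Matrix.mulVec, dotProduct, Fin.sum_univ_three, Pi.smul_apply,
      smul_eq_mul, Matrix.cons_val_zero, Matrix.cons_val_one, Matrix.head_cons,
      Matrix.cons_val_two, Matrix.tail_cons, n1, n2, m1, m2, k1, k2] at f1 f2
    norm_num [hc] at f1 f2
    have h6 : A' 0 1 * (2 * γ * A 0 1 * A 1 2 ^ 2) = 0 := by linear_combination f1 + f2
    exact (mul_eq_zero.mp h6).resolve_right hfac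
  have g1 : A' 1 1 = 0 := by
    have f1 := congrFun (H ![0,1,1]) 1
    have f2 := congrFun (H ![0,1,-1]) 1
    simp only [F27, Matrix.mulVec, dotProduct, Fin.sum_univ_three, Pi.smul_apply,
      smul_eq_mul, Matrix.cons_val_zero, Matrix.cons_val_one, Matrix.head_cons,
      Matrix.cons_val_two, Matrix.tail_cons, n1, n2, m1, m2, k1, k2] at f1 f2
    norm_num [hc] at f1 f2
    have h6 : A' 1 1 * (2 * γ * A 0 1 * A 1 2 ^ 2) = 0 := by linear_combination f1 + f2
    exact (mul_eq_zero.mp h6).resolve_right hfac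
  have g2 : A' 2 1 = 0 := by
    have f1 := congrFun (H ![0,1,1]) 2
    have f2 := congrFun (H ![0,1,-1]) 2
    simp only [F27, Matrix.mulVec, dotProduct, Fin.sum_univ_three, Pi.smul_apply,
      smul_eq_mul, Matrix.cons_val_zero, Matrix.cons_val_one, Matrix.head_cons,
      Matrix.cons_val_two, Matrix.tail_cons, n1, n2, m1, m2, k1, k2] at f1 f2
    norm_num [hc] at f1 f2
    have h6 : A' 2 1 * (c * (2 * γ * A 0 1 * A 1 2 ^ 2)) = 0 := by linear_combination -f1 - f2
    exact (mul_eq_zero.mp h6).resolve_right (mul_ne_zero hc hfac)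
  exact cr27_colzero hinj' (j := 1) (k := 0) (fun i _ => by fin_cases i <;> assumption) g0

/-! ### The explicit witness for `γ ↦ 1/γ` -/

def cr27_Bmat (γ : ℂ) : Matrix (Fin 3) (Fin 3) ℂ :=
  !![0, 1, 0; 1, 0, 0; 0, 0, -γ]

noncomputable def cr27_BmatInv (γ : ℂ) : Matrix (Fin 3) (Fin 3) ℂ :=
  !![0, 1, 0; 1, 0, 0; 0, 0, -(1/γ)]

noncomputable def cr27_Mgl (γ : ℂ) (hγ0 : γ ≠ 0) : Matrix.GeneralLinearGroup (Fin 3) ℂ :=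
  ⟨cr27_Bmat γ, cr27_BmatInv γ,
   by ext i j; fin_cases i <;> fin_cases j <;>
        (try simp [cr27_Bmat, cr27_BmatInv, Matrix.mul_apply, Fin.sum_univ_three,
          Matrix.one_apply, Matrix.vecHead, Matrix.vecTail]) <;>
        (try field_simp),
   by ext i j; fin_cases i <;> fin_cases j <;>
        (try simp [cr27_Bmat, cr27_BmatInv, Matrix.mul_apply, Fin.sum_univ_three,
          Matrix.one_apply, Matrix.vecHead, Matrix.vecTail]) <;>
        (try field_simp)⟩

def cr27_alphaGL : Matrix.GeneralLinearGroup (Fin 3) ℂ :=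
  ⟨alphaMat, alphaMat,
   by ext i j; fin_cases i <;> fin_cases j <;>
        simp [alphaMat, Matrix.mul_apply, Fin.sum_univ_three, Matrix.one_apply,
          Matrix.vecHead, Matrix.vecTail],
   by ext i j; fin_cases i <;> fin_cases j <;>
        simp [alphaMat, Matrix.mul_apply, Fin.sum_univ_three, Matrix.one_apply,
          Matrix.vecHead, Matrix.vecTail]⟩

lemma cr27_wit (γ : ℂ) (hγ0 : γ ≠ 0) (v : Fin 3 → ℂ) :
    F27 (1 / γ) v = (γ ^ 2)⁻¹ • (cr27_Bmat γ).mulVec (F27 γ (alphaMat.mulVec v)) := by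
  funext i
  fin_cases i <;>
    (simp [F27, alphaMat, cr27_Bmat, Matrix.mulVec, dotProduct, Fin.sum_univ_three]) <;>
    (try field_simp) <;> (try ring) <;> (try tauto)

/-! ### Main theorem -/

/-- For `γ, γ' ≠ 0, 1`, the map `φ₂₇,γ'` is equivalent to `φ₂₇,γ` if and only if
`γ' = γ` or `γ' = 1/γ`.  In particular the automorphism `α([x:y:z]) = [y:x:-z]`
realizes the equivalence between `φ₂₇,γ` and `φ₂₇,1/γ` (conjugating the base
configurations): precomposing `φ₂₇,γ` with `α` gives `φ₂₇,1/γ` up to a linear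
automorphism and a scalar. -/
theorem stmt18 (γ γ' : ℂ) (hγ0 : γ ≠ 0) (hγ1 : γ ≠ 1) (hγ'0 : γ' ≠ 0) (hγ'1 : γ' ≠ 1) :
    (Equiv27 γ γ' ↔ (γ' = γ ∨ γ' = 1 / γ)) ∧
    (∃ (M' : Matrix.GeneralLinearGroup (Fin 3) ℂ) (c : ℂ), c ≠ 0 ∧
      ∀ v : Fin 3 → ℂ,
        F27 (1 / γ) v =
          c • (M' : Matrix (Fin 3) (Fin 3) ℂ).mulVec (F27 γ (alphaMat.mulVec v))) := by
  constructor
  · constructor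
    · rintro ⟨M, M', c, hc, H⟩
      have hinj : ∀ v, (M : Matrix (Fin 3) (Fin 3) ℂ).mulVec v = 0 → v = 0 :=
        fun v h => cr27_glinj M v h
      have hinj' : ∀ v, (M' : Matrix (Fin 3) (Fin 3) ℂ).mulVec v = 0 → v = 0 :=
        fun v h => cr27_glinj M' v h
      set A : Matrix (Fin 3) (Fin 3) ℂ := (M : Matrix (Fin 3) (Fin 3) ℂ) with hAdef
      set A' : Matrix (Fin 3) (Fin 3) ℂ := (M' : Matrix (Fin 3) (Fin 3) ℂ) with hA'def
      have base : ∀ v : Fin 3 → ℂ,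
          ((v 0 = 0 ∧ v 1 = 0) ∨ (v 0 = 0 ∧ v 2 = 0) ∨ (v 1 = 0 ∧ v 2 = 0)) →
          F27 γ (A.mulVec v) = 0 := by
        intro v hv
        have hL : F27 γ' v = 0 := (cr27_F27_eq_zero_iff γ' hγ'0 v).mpr hv
        have h2 : c • (A'.mulVec (F27 γ (A.mulVec v))) = 0 := by rw [← H v, hL]
        exact hinj' _ ((smul_eq_zero.mp h2).resolve_left hc)
      have d0 := (cr27_F27_eq_zero_iff γ hγ0 _).mp (base ![1,0,0] (by norm_num [Matrix.cons_val_two, Matrix.vecHead, Matrix.vecTail]))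
      have d1 := (cr27_F27_eq_zero_iff γ hγ0 _).mp (base ![0,1,0] (by norm_num [Matrix.cons_val_two, Matrix.vecHead, Matrix.vecTail]))
      have d2 := (cr27_F27_eq_zero_iff γ hγ0 _).mp (base ![0,0,1] (by norm_num))
      simp only [Matrix.mulVec, dotProduct, Fin.sum_univ_three, Matrix.cons_val_zero,
        Matrix.cons_val_one, Matrix.head_cons, Matrix.cons_val_two, Matrix.tail_cons,
        mul_one, mul_zero, add_zero, zero_add] at d0 d1 d2
      rcases d0 with ⟨n1, n2⟩ | ⟨n1, n2⟩ | ⟨n1, n2⟩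
      · -- col 0 on axis 2
        have w0 : ∀ i : Fin 3, i ≠ 2 → A i 0 = 0 := fun i hi => by
          fin_cases i
          · exact n1
          · exact n2
          · exact absurd rfl hi
        rcases d1 with ⟨m1, m2⟩ | ⟨m1, m2⟩ | ⟨m1, m2⟩
        · -- col 1 on axis 2 : clash
          have w1 : ∀ i : Fin 3, i ≠ 2 → A i 1 = 0 := fun i hi => by
            fin_cases i
            · exact m1
            · exact m2
            · exact absurd rfl hi
          exact (cr27_clash hinj (by decide) w0 w1).elim
        · -- col 1 on axis 1
          rcases d2 with ⟨q1, q2⟩ | ⟨q1, q2⟩ | ⟨q1, q2⟩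
          · -- col 2 on axis 2 : clash with col 0
            have w2 : ∀ i : Fin 3, i ≠ 2 → A i 2 = 0 := fun i hi => by
              fin_cases i
              · exact q1
              · exact q2
              · exact absurd rfl hi
            exact (cr27_clash hinj (by decide) w0 w2).elim
          · -- col 2 on axis 1 : clash with col 1
            have w1 : ∀ i : Fin 3, i ≠ 1 → A i 1 = 0 := fun i hi => by
              fin_cases i
              · exact m1
              · exact absurd rfl hi
              · exact m2
            have w2 : ∀ i : Fin 3, i ≠ 1 → A i 2 = 0 := fun i hi => by
              fin_cases i
              · exact q1
              · exact absurd rfl hi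
              · exact q2
            exact (cr27_clash hinj (by decide) w1 w2).elim
          · -- col 2 on axis 0 : bad_b (col0↦2, col1↦1, col2↦0)
            have w1 : ∀ i : Fin 3, i ≠ 1 → A i 1 = 0 := fun i hi => by
              fin_cases i
              · exact m1
              · exact absurd rfl hi
              · exact m2
            have w2 : ∀ i : Fin 3, i ≠ 0 → A i 2 = 0 := fun i hi => by
              fin_cases i
              · exact absurd rfl hi
              · exact q1
              · exact q2
            exact (cr27_bad_b γ γ' c hγ0 hc A A' hinj' H n1 n2 m1 m2 q1 q2
              (fun h => cr27_colzero hinj w1 h) (fun h => cr27_colzero hinj w2 h)).elim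
        · -- col 1 on axis 0
          rcases d2 with ⟨q1, q2⟩ | ⟨q1, q2⟩ | ⟨q1, q2⟩
          · -- col 2 on axis 2 : clash with col 0
            have w2 : ∀ i : Fin 3, i ≠ 2 → A i 2 = 0 := fun i hi => by
              fin_cases i
              · exact q1
              · exact q2
              · exact absurd rfl hi
            exact (cr27_clash hinj (by decide) w0 w2).elim
          · -- col 2 on axis 1 : bad_d (col0↦2, col1↦0, col2↦1)
            have w1 : ∀ i : Fin 3, i ≠ 0 → A i 1 = 0 := fun i hi => by
              fin_cases i
              · exact absurd rfl hi
              · exact m1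
              · exact m2
            have w2 : ∀ i : Fin 3, i ≠ 1 → A i 2 = 0 := fun i hi => by
              fin_cases i
              · exact q1
              · exact absurd rfl hi
              · exact q2
            exact (cr27_bad_d γ γ' c hγ0 hc A A' hinj' H n1 n2 m1 m2 q1 q2
              (fun h => cr27_colzero hinj w1 h) (fun h => cr27_colzero hinj w2 h)).elim
          · -- col 2 on axis 0 : clash with col 1
            have w1 : ∀ i : Fin 3, i ≠ 0 → A i 1 = 0 := fun i hi => by
              fin_cases i
              · exact absurd rfl hi
              · exact m1
              · exact m2
            have w2 : ∀ i : Fin 3, i ≠ 0 → A i 2 = 0 := fun i hi => by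
              fin_cases i
              · exact absurd rfl hi
              · exact q1
              · exact q2
            exact (cr27_clash hinj (by decide) w1 w2).elim
      · -- col 0 on axis 1
        have w0 : ∀ i : Fin 3, i ≠ 1 → A i 0 = 0 := fun i hi => by
          fin_cases i
          · exact n1
          · exact absurd rfl hi
          · exact n2
        rcases d1 with ⟨m1, m2⟩ | ⟨m1, m2⟩ | ⟨m1, m2⟩
        · -- col 1 on axis 2
          rcases d2 with ⟨q1, q2⟩ | ⟨q1, q2⟩ | ⟨q1, q2⟩
          · -- col 2 on axis 2 : clash with col 1
            have w1 : ∀ i : Fin 3, i ≠ 2 → A i 1 = 0 := fun i hi => by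
              fin_cases i
              · exact m1
              · exact m2
              · exact absurd rfl hi
            have w2 : ∀ i : Fin 3, i ≠ 2 → A i 2 = 0 := fun i hi => by
              fin_cases i
              · exact q1
              · exact q2
              · exact absurd rfl hi
            exact (cr27_clash hinj (by decide) w1 w2).elim
          · -- col 2 on axis 1 : clash with col 0
            have w2 : ∀ i : Fin 3, i ≠ 1 → A i 2 = 0 := fun i hi => by
              fin_cases i
              · exact q1
              · exact absurd rfl hi
              · exact q2
            exact (cr27_clash hinj (by decide) w0 w2).elim
          · -- col 2 on axis 0 : bad_a (col0↦1, col1↦2, col2↦0)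
            have w1 : ∀ i : Fin 3, i ≠ 2 → A i 1 = 0 := fun i hi => by
              fin_cases i
              · exact m1
              · exact m2
              · exact absurd rfl hi
            have w2 : ∀ i : Fin 3, i ≠ 0 → A i 2 = 0 := fun i hi => by
              fin_cases i
              · exact absurd rfl hi
              · exact q1
              · exact q2
            exact (cr27_bad_a γ γ' c hγ0 hc A A' hinj' H n1 n2 m1 m2 q1 q2
              (fun h => cr27_colzero hinj w0 h) (fun h => cr27_colzero hinj w2 h)).elim
        · -- col 1 on axis 1 : clash with col 0
          have w1 : ∀ i : Fin 3, i ≠ 1 → A i 1 = 0 := fun i hi => by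
            fin_cases i
            · exact m1
            · exact absurd rfl hi
            · exact m2
          exact (cr27_clash hinj (by decide) w0 w1).elim
        · -- col 1 on axis 0
          rcases d2 with ⟨q1, q2⟩ | ⟨q1, q2⟩ | ⟨q1, q2⟩
          · -- col 2 on axis 2 : GOOD (swap) col0↦1, col1↦0, col2↦2
            exact cr27_good2 γ γ' c hγ0 hc A A' H n1 n2 m1 m2 q1 q2
          · -- col 2 on axis 1 : clash with col 0
            have w2 : ∀ i : Fin 3, i ≠ 1 → A i 2 = 0 := fun i hi => by
              fin_cases i
              · exact q1
              · exact absurd rfl hi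
              · exact q2
            exact (cr27_clash hinj (by decide) w0 w2).elim
          · -- col 2 on axis 0 : clash with col 1
            have w1 : ∀ i : Fin 3, i ≠ 0 → A i 1 = 0 := fun i hi => by
              fin_cases i
              · exact absurd rfl hi
              · exact m1
              · exact m2
            have w2 : ∀ i : Fin 3, i ≠ 0 → A i 2 = 0 := fun i hi => by
              fin_cases i
              · exact absurd rfl hi
              · exact q1
              · exact q2
            exact (cr27_clash hinj (by decide) w1 w2).elim
      · -- col 0 on axis 0
        have w0 : ∀ i : Fin 3, i ≠ 0 → A i 0 = 0 := fun i hi => by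
          fin_cases i
          · exact absurd rfl hi
          · exact n1
          · exact n2
        rcases d1 with ⟨m1, m2⟩ | ⟨m1, m2⟩ | ⟨m1, m2⟩
        · -- col 1 on axis 2
          rcases d2 with ⟨q1, q2⟩ | ⟨q1, q2⟩ | ⟨q1, q2⟩
          · -- col 2 on axis 2 : clash with col 1
            have w1 : ∀ i : Fin 3, i ≠ 2 → A i 1 = 0 := fun i hi => by
              fin_cases i
              · exact m1
              · exact m2
              · exact absurd rfl hi
            have w2 : ∀ i : Fin 3, i ≠ 2 → A i 2 = 0 := fun i hi => by
              fin_cases i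
              · exact q1
              · exact q2
              · exact absurd rfl hi
            exact (cr27_clash hinj (by decide) w1 w2).elim
          · -- col 2 on axis 1 : bad_c (col0↦0, col1↦2, col2↦1)
            have w1 : ∀ i : Fin 3, i ≠ 2 → A i 1 = 0 := fun i hi => by
              fin_cases i
              · exact m1
              · exact m2
              · exact absurd rfl hi
            have w2 : ∀ i : Fin 3, i ≠ 1 → A i 2 = 0 := fun i hi => by
              fin_cases i
              · exact q1
              · exact absurd rfl hi
              · exact q2
            exact (cr27_bad_c γ γ' c hγ0 hc A A' hinj' H n1 n2 m1 m2 q1 q2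
              (fun h => cr27_colzero hinj w0 h) (fun h => cr27_colzero hinj w2 h)).elim
          · -- col 2 on axis 0 : clash with col 0
            have w2 : ∀ i : Fin 3, i ≠ 0 → A i 2 = 0 := fun i hi => by
              fin_cases i
              · exact absurd rfl hi
              · exact q1
              · exact q2
            exact (cr27_clash hinj (by decide) w0 w2).elim
        · -- col 1 on axis 1
          rcases d2 with ⟨q1, q2⟩ | ⟨q1, q2⟩ | ⟨q1, q2⟩
          · -- col 2 on axis 2 : GOOD (identity) col0↦0, col1↦1, col2↦2
            exact cr27_good1 γ γ' c hγ0 hc A A' H n1 n2 m1 m2 q1 q2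
          · -- col 2 on axis 1 : clash with col 1
            have w1 : ∀ i : Fin 3, i ≠ 1 → A i 1 = 0 := fun i hi => by
              fin_cases i
              · exact m1
              · exact absurd rfl hi
              · exact m2
            have w2 : ∀ i : Fin 3, i ≠ 1 → A i 2 = 0 := fun i hi => by
              fin_cases i
              · exact q1
              · exact absurd rfl hi
              · exact q2
            exact (cr27_clash hinj (by decide) w1 w2).elim
          · -- col 2 on axis 0 : clash with col 0
            have w2 : ∀ i : Fin 3, i ≠ 0 → A i 2 = 0 := fun i hi => by
              fin_cases i
              · exact absurd rfl hi
              · exact q1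
              · exact q2
            exact (cr27_clash hinj (by decide) w0 w2).elim
        · -- col 1 on axis 0 : clash with col 0
          have w1 : ∀ i : Fin 3, i ≠ 0 → A i 1 = 0 := fun i hi => by
            fin_cases i
            · exact absurd rfl hi
            · exact m1
            · exact m2
          exact (cr27_clash hinj (by decide) w0 w1).elim
    · rintro (rfl | rfl)
      · exact ⟨1, 1, 1, one_ne_zero, fun v => by
          simp [Units.val_one, Matrix.one_mulVec]⟩
      · exact ⟨cr27_alphaGL, cr27_Mgl γ hγ0, (γ ^ 2)⁻¹,
          inv_ne_zero (pow_ne_zero 2 hγ0), fun v => cr27_wit γ hγ0 v⟩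
  · exact ⟨cr27_Mgl γ hγ0, (γ ^ 2)⁻¹, inv_ne_zero (pow_ne_zero 2 hγ0),
      fun v => cr27_wit γ hγ0 v⟩
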